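/- Let α be a real number with cos α = √2 − 1, and consider the 2×2 complex matrices A = [[1,0],[0,0]] and B = [[1,0],[0,0]] · [[cos α, −sin α],[sin α, cos α]]. Then ‖A+B‖_F² = ((1+√2)/2)·‖|A|+|B|‖_F², i.e., equality holds in the inequality ‖A+B‖_F ≤ √((1+√2)/2)·‖|A|+|B|‖_F, showing that the constant √((1+√2)/2) is optimal. -/

import Mathlib

open scoped Matrix ComplexOrder

/-- The absolute value `|A| := (A*A)^{1/2}` of a square complex matrix, i.e. the (unique)
positive semidefinite square root of `Aᴴ * A`. -/
noncomputable def matrixAbs {n : ℕ} (A : Matrix (Fin n) (Fin n) ℂ) :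
    Matrix (Fin n) (Fin n) ℂ :=
  ((Matrix.posSemidef_conjTranspose_mul_self A).1.eigenvectorUnitary : Matrix (Fin n) (Fin n) ℂ) *
    Matrix.diagonal ((↑) ∘ (Real.sqrt ·) ∘ (Matrix.posSemidef_conjTranspose_mul_self A).1.eigenvalues) *
    (star ((Matrix.posSemidef_conjTranspose_mul_self A).1.eigenvectorUnitary : Matrix (Fin n) (Fin n) ℂ))

/-- The Frobenius norm `‖A‖_F = (tr |A|²)^{1/2}` of a square complex matrix. -/
noncomputable def frobeniusNorm' {n : ℕ} (A : Matrix (Fin n) (Fin n) ℂ) : ℝ :=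
  Real.sqrt ((matrixAbs A ^ 2).trace.re)

open scoped MatrixOrder in
lemma matrixAbs_eq_sqrt {n : ℕ} (M : Matrix (Fin n) (Fin n) ℂ) :
    matrixAbs M = CFC.sqrt (Mᴴ * M) := by
  have h0 : (0 : Matrix (Fin n) (Fin n) ℂ) ≤ Mᴴ * M :=
    Matrix.nonneg_iff_posSemidef.mpr (Matrix.posSemidef_conjTranspose_mul_self M)
  rw [CFC.sqrt_eq_real_sqrt _ h0, cfcₙ_eq_cfc (hf0 := Real.sqrt_zero),
    (Matrix.posSemidef_conjTranspose_mul_self M).1.cfc_eq, Matrix.IsHermitian.cfc,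
    Unitary.conjStarAlgAut_apply, matrixAbs]
  rfl

open scoped MatrixOrder in
lemma matrixAbs_eq {n : ℕ} {M P : Matrix (Fin n) (Fin n) ℂ} (hP : P.PosSemidef)
    (h : P ^ 2 = Mᴴ * M) : matrixAbs M = P :=
  by rw [matrixAbs_eq_sqrt, ← h]; exact CFC.sqrt_sq P (Matrix.nonneg_iff_posSemidef.mpr hP)

open scoped MatrixOrder in
lemma frob_sq {n : ℕ} (M : Matrix (Fin n) (Fin n) ℂ) (h : 0 ≤ ((Mᴴ * M).trace).re) :
    frobeniusNorm' M ^ 2 = ((Mᴴ * M).trace).re := by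
  rw [frobeniusNorm', matrixAbs_eq_sqrt, CFC.sq_sqrt _
    (Matrix.nonneg_iff_posSemidef.mpr (Matrix.posSemidef_conjTranspose_mul_self M))]
  exact Real.sq_sqrt h

/-- **Sharpness of Lee's constant:** with `cos α = √2 − 1`,
`A = [[1,0],[0,0]]` and `B = [[1,0],[0,0]] · [[cos α, −sin α],[sin α, cos α]]`,
equality `‖A+B‖_F² = ((1+√2)/2)·‖|A|+|B|‖_F²` holds. -/
theorem sq_frobenius_norm_add_eq_of_cos_eq (α : ℝ) (hα : Real.cos α = Real.sqrt 2 - 1)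
    (A B : Matrix (Fin 2) (Fin 2) ℂ)
    (hA : A = !![1, 0; 0, 0])
    (hB : B = !![1, 0; 0, 0] *
      !![(Real.cos α : ℂ), -(Real.sin α : ℂ); (Real.sin α : ℂ), (Real.cos α : ℂ)]) :
    frobeniusNorm' (A + B) ^ 2 =
      ((1 + Real.sqrt 2) / 2) * frobeniusNorm' (matrixAbs A + matrixAbs B) ^ 2 := by
  have hsc : Real.sin α ^ 2 = 1 - Real.cos α ^ 2 := by
    have := Real.sin_sq_add_cos_sq α; linarith
  set c := Real.cos α with hc
  set s := Real.sin α with hs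
  have hscC : (s : ℂ) ^ 2 = 1 - (c : ℂ) ^ 2 := by exact_mod_cast congrArg Complex.ofReal hsc
  have hB' : B = !![(c : ℂ), -(s : ℂ); 0, 0] := by
    rw [hB]; ext i j; fin_cases i <;> fin_cases j <;>
      simp [Matrix.mul_apply, Fin.sum_univ_succ]
  have habsA : matrixAbs A = A := by
    apply matrixAbs_eq
    · have h1 : Aᴴ * A = A := by
        rw [hA]; ext i j; fin_cases i <;> fin_cases j <;>
          simp [Matrix.mul_apply, Fin.sum_univ_succ]
      exact h1 ▸ Matrix.posSemidef_conjTranspose_mul_self A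
    · rw [hA]; ext i j; fin_cases i <;> fin_cases j <;>
        simp [Matrix.mul_apply, Fin.sum_univ_succ, pow_two]
  have habsB : matrixAbs B = Bᴴ * B := by
    apply matrixAbs_eq (Matrix.posSemidef_conjTranspose_mul_self B)
    rw [hB']; ext i j; fin_cases i <;> fin_cases j <;>
      simp [Matrix.mul_apply, Fin.sum_univ_succ, pow_two, Matrix.conjTranspose_apply]
    · linear_combination ((c:ℂ)^2) * hscC
    · linear_combination (-((c:ℂ)*s)) * hscC
    · linear_combination (-((c:ℂ)*s)) * hscC
    · linear_combination ((s:ℂ)^2) * hscC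
  have hAB : A + B = !![1 + (c : ℂ), -(s : ℂ); 0, 0] := by
    rw [hA, hB']; ext i j; fin_cases i <;> fin_cases j <;> simp
  have hM : A + Bᴴ * B = !![1 + (c : ℂ)^2, -((c : ℂ)*s); -((c : ℂ)*s), (s : ℂ)^2] := by
    rw [hA, hB']; ext i j; fin_cases i <;> fin_cases j <;>
      simp [Matrix.mul_apply, Fin.sum_univ_succ, Matrix.conjTranspose_apply] <;> ring
  have t1 : (((A + B)ᴴ * (A + B)).trace).re = (1 + c)^2 + s^2 := by
    rw [hAB]
    simp [Matrix.trace, Matrix.mul_apply, Fin.sum_univ_succ, Matrix.conjTranspose_apply,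
      Complex.add_re, Complex.mul_re, Complex.conj_ofReal]
    ring
  have t2 : (((A + Bᴴ * B)ᴴ * (A + Bᴴ * B)).trace).re
      = (1 + c^2)^2 + 2*(c*s)^2 + (s^2)^2 := by
    rw [hM]
    simp [Matrix.trace, Matrix.mul_apply, Fin.sum_univ_succ, Matrix.conjTranspose_apply,
      Complex.add_re, Complex.mul_re, Complex.conj_ofReal, ← Complex.ofReal_pow]
    ring
  have pos1 : 0 ≤ (((A + B)ᴴ * (A + B)).trace).re := by rw [t1]; positivity
  have pos2 : 0 ≤ (((A + Bᴴ * B)ᴴ * (A + Bᴴ * B)).trace).re := by rw [t2]; positivity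
  rw [frob_sq _ pos1, habsA, habsB, frob_sq _ pos2, t1, t2]
  have e1 : (1 + c)^2 + s^2 = 2 + 2*c := by rw [hsc]; ring
  have e2 : (1 + c^2)^2 + 2*(c*s)^2 + (s^2)^2 = 2 + 2*c^2 := by
    linear_combination (1 + s^2 + c^2) * hsc
  rw [e1, e2, hα]
  linear_combination (1 - Real.sqrt 2) * Real.sq_sqrt (by norm_num : (0:ℝ) ≤ 2)
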